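/- For any n ≥ 3, m*(n,3) ≤ ⌈(3/log₂ 3)·log₂ n⌉: there exists a 3-decodable binary matrix with n columns and at most ⌈(3/log₂3)·log₂ n⌉ ≈ ⌈1.89·log₂ n⌉ rows. -/

import Mathlib

def NN : ℕ → ℕ
  | 0 => 0
  | 1 => 1
  | 2 => 2
  | 3 => 3
  | (m+4) => 3 + 3 * NN (m+1)

def MM : ℕ → ℕ → ℕ → Bool
  | 0, _, _ => false
  | 1, i, j => decide (i = j)
  | 2, i, j => decide (i = j)
  | 3, i, j => decide (i = j)
  | (m+4), i, j =>
      if j < 3 then decide (i = j)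
      else if i < 3 then decide (i = (j - 3) / NN (m+1))
      else MM (m+1) (i - 3) ((j - 3) % NN (m+1))

lemma NN_pos : ∀ m : ℕ, 1 ≤ m → 0 < NN m
  | 1, _ => by simp [NN]
  | 2, _ => by simp [NN]
  | 3, _ => by simp [NN]
  | (m+4), _ => by simp [NN]

lemma id_case (m : ℕ) (S : Finset ℕ) (hS : ∀ j ∈ S, j < m) (hne : S.Nonempty) :
    ∃ i, i < m ∧ (S.filter (fun j => (decide (i = j) : Bool) = true)).card = 1 := by
  obtain ⟨j₀, hj₀⟩ := hne
  refine ⟨j₀, hS _ hj₀, ?_⟩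
  have h : S.filter (fun j => (decide (j₀ = j) : Bool) = true) = {j₀} := by
    ext j
    simp only [Finset.mem_filter, decide_eq_true_eq, Finset.mem_singleton]
    constructor
    · rintro ⟨_, rfl⟩; rfl
    · rintro rfl; exact ⟨hj₀, rfl⟩
  rw [h]; simp

lemma MM_key : ∀ m : ℕ, 1 ≤ m → ∀ S : Finset ℕ, (∀ j ∈ S, j < NN m) → S.Nonempty →
    S.card ≤ 3 → ∃ i, i < m ∧ (S.filter (fun j => MM m i j = true)).card = 1 := by
  intro m
  induction m using Nat.strong_induction_on with
  | _ m ih =>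
  match m with
  | 0 => intro h; omega
  | 1 => intro _ S hS hne _; exact id_case 1 S (by simpa [NN] using hS) hne
  | 2 => intro _ S hS hne _; exact id_case 2 S (by simpa [NN] using hS) hne
  | 3 => intro _ S hS hne _; exact id_case 3 S (by simpa [NN] using hS) hne
  | (k+4) =>
    intro _ S hS hne hcard
    set t := NN (k+1) with ht_def
    have ht : 0 < t := NN_pos (k+1) (by omega)
    set sym : ℕ → ℕ := fun j => if j < 3 then j else (j - 3) / t with hsym
    have hNval : ∀ j ∈ S, j < 3 + 3 * t := by
      intro j hj
      have := hS j hj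
      simpa [NN] using this
    have hsym_lt : ∀ j ∈ S, sym j < 3 := by
      intro j hj
      have hjN : j < 3 + 3 * t := hNval j hj
      by_cases h3 : j < 3
      · simpa [hsym, h3] using h3
      · simp only [hsym, if_neg h3]
        exact Nat.div_lt_of_lt_mul (by omega)
    have hrow_top : ∀ i, i < 3 → ∀ j, MM (k+4) i j = decide (i = sym j) := by
      intro i hi j
      by_cases h3 : j < 3 <;> simp [MM, h3, hi, hsym, ← ht_def]
    by_cases hA : ∃ j ∈ S, (S.filter (fun j' => sym j' = sym j)).card = 1
    · obtain ⟨j₀, hj₀, hfib⟩ := hA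
      refine ⟨sym j₀, lt_of_lt_of_le (hsym_lt j₀ hj₀) (by omega), ?_⟩
      have h : S.filter (fun j => MM (k+4) (sym j₀) j = true)
             = S.filter (fun j' => sym j' = sym j₀) := by
        apply Finset.filter_congr
        intro j hj
        rw [hrow_top _ (hsym_lt j₀ hj₀) j]
        simp [eq_comm]
      rw [h]; exact hfib
    · push_neg at hA
      have hfib2 : ∀ j ∈ S, 2 ≤ (S.filter (fun j' => sym j' = sym j)).card := by
        intro j hj
        have h1 : 0 < (S.filter (fun j' => sym j' = sym j)).card :=
          Finset.card_pos.mpr ⟨j, Finset.mem_filter.mpr ⟨hj, rfl⟩⟩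
        have h2 := hA j hj
        omega
      obtain ⟨j₀, hj₀⟩ := hne
      have hall : ∀ j ∈ S, sym j = sym j₀ := by
        intro j hj
        by_contra hne'
        have hdisj : Disjoint (S.filter (fun j' => sym j' = sym j))
            (S.filter (fun j' => sym j' = sym j₀)) := by
          rw [Finset.disjoint_left]
          intro a ha hb
          have h1 := (Finset.mem_filter.mp ha).2
          have h2 := (Finset.mem_filter.mp hb).2
          exact hne' (h1 ▸ h2 ▸ rfl)
        have hu : (S.filter (fun j' => sym j' = sym j)) ∪
            (S.filter (fun j' => sym j' = sym j₀)) ⊆ S :=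
          Finset.union_subset (Finset.filter_subset _ _) (Finset.filter_subset _ _)
        have hcu := Finset.card_union_of_disjoint hdisj
        have hle := Finset.card_le_card hu
        have := hfib2 j hj
        have := hfib2 j₀ hj₀
        omega
      have hcard2 : 2 ≤ S.card := by
        have := hfib2 j₀ hj₀
        have := Finset.card_filter_le S (fun j' => sym j' = sym j₀)
        omega
      -- there is an element ≥ 3
      have hS3ne : (S.filter (fun j => 3 ≤ j)).Nonempty := by
        obtain ⟨a, ha, b, hb, hab⟩ := Finset.one_lt_card.mp hcard2
        rcases Nat.lt_or_ge a 3 with h3a | h3a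
        · rcases Nat.lt_or_ge b 3 with h3b | h3b
          · exfalso
            have e1 : sym a = a := by simp [hsym, h3a]
            have e2 : sym b = b := by simp [hsym, h3b]
            have := (hall a ha).trans (hall b hb).symm
            rw [e1, e2] at this
            exact hab this
          · exact ⟨b, Finset.mem_filter.mpr ⟨hb, h3b⟩⟩
        · exact ⟨a, Finset.mem_filter.mpr ⟨ha, h3a⟩⟩
      set f : ℕ → ℕ := fun j => (j - 3) % t with hf
      have hinj : ∀ j₁ ∈ S.filter (fun j => 3 ≤ j), ∀ j₂ ∈ S.filter (fun j => 3 ≤ j),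
          f j₁ = f j₂ → j₁ = j₂ := by
        intro j₁ hj₁ j₂ hj₂ hfe
        obtain ⟨hj₁S, h3j₁⟩ := Finset.mem_filter.mp hj₁
        obtain ⟨hj₂S, h3j₂⟩ := Finset.mem_filter.mp hj₂
        have e1 : sym j₁ = (j₁ - 3) / t := by simp [hsym, Nat.not_lt.mpr h3j₁]
        have e2 : sym j₂ = (j₂ - 3) / t := by simp [hsym, Nat.not_lt.mpr h3j₂]
        have hdiv : (j₁ - 3) / t = (j₂ - 3) / t := by
          rw [← e1, ← e2, hall j₁ hj₁S, hall j₂ hj₂S]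
        have hsum : j₁ - 3 = j₂ - 3 := by
          rw [← Nat.div_add_mod (j₁ - 3) t, ← Nat.div_add_mod (j₂ - 3) t, hdiv]
          simp only [hf] at hfe
          rw [hfe]
        omega
      set S' := (S.filter (fun j => 3 ≤ j)).image f with hS'
      have hS'bound : ∀ c ∈ S', c < NN (k+1) := by
        intro c hc
        obtain ⟨j, hj, rfl⟩ := Finset.mem_image.mp hc
        exact Nat.mod_lt _ ht
      have hS'ne : S'.Nonempty := hS3ne.image f
      have hS'card : S'.card ≤ 3 :=
        le_trans Finset.card_image_le (le_trans (Finset.card_filter_le _ _) hcard)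
      obtain ⟨i', hi', hc'⟩ := ih (k+1) (by omega) (by omega) S' hS'bound hS'ne hS'card
      refine ⟨i' + 3, by omega, ?_⟩
      have hrow_bot : ∀ j ∈ S,
          (MM (k+4) (i'+3) j = true ↔ (3 ≤ j ∧ MM (k+1) i' (f j) = true)) := by
        intro j hj
        by_cases h3 : j < 3
        · apply iff_of_false
          · simp only [MM, if_pos h3, decide_eq_true_eq]
            omega
          · exact fun h => absurd h.1 (by omega)
        · have e : MM (k+4) (i'+3) j = MM (k+1) i' ((j-3) % t) := by
            simp [MM, h3, ← ht_def]
          rw [e]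
          simp [Nat.le_of_not_lt h3, hf]
      have e1 : S.filter (fun j => MM (k+4) (i'+3) j = true)
          = (S.filter (fun j => 3 ≤ j)).filter (fun j => MM (k+1) i' (f j) = true) := by
        rw [Finset.filter_filter]
        exact Finset.filter_congr hrow_bot
      have e2 : S'.filter (fun c => MM (k+1) i' c = true)
          = ((S.filter (fun j => 3 ≤ j)).filter (fun j => MM (k+1) i' (f j) = true)).image f := by
        rw [hS', Finset.filter_image]
      have hsub : (S.filter (fun j => 3 ≤ j)).filter (fun j => MM (k+1) i' (f j) = true)
          ⊆ S.filter (fun j => 3 ≤ j) := Finset.filter_subset _ _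
      rw [e1]
      rw [e2, Finset.card_image_of_injOn
        (fun a ha b hb hab => hinj a (hsub ha) b (hsub hb) hab)] at hc'
      exact hc'

lemma rpow_43 : (3:ℝ) ^ ((4:ℝ)/3) ≤ 6 := by
  apply le_of_pow_le_pow_left₀ (n := 3) (by norm_num) (by norm_num)
  have : ((3:ℝ) ^ ((4:ℝ)/3)) ^ (3:ℕ) = (3:ℝ) ^ ((4:ℝ)) := by
    rw [← Real.rpow_natCast ((3:ℝ) ^ ((4:ℝ)/3)) 3, ← Real.rpow_mul (by norm_num)]
    norm_num
  rw [this, show (4:ℝ) = ((4:ℕ):ℝ) by norm_num, Real.rpow_natCast]; norm_num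

lemma NN_bound : ∀ m : ℕ, 3 ≤ m → (3:ℝ) ^ ((m:ℝ)/3) ≤ (NN m : ℝ) := by
  intro m
  induction m using Nat.strong_induction_on with
  | _ m ih =>
    match m with
    | 0 | 1 | 2 => omega
    | 3 => intro _; rw [show ((3:ℕ):ℝ)/3 = 1 by norm_num, Real.rpow_one]; norm_num [NN]
    | 4 => intro _
           rw [show ((4:ℕ):ℝ)/3 = (4:ℝ)/3 by norm_num]
           refine rpow_43.trans ?_
           norm_num [NN]
    | 5 => intro _
           have h1 : (3:ℝ) ^ (((5:ℕ):ℝ)/3) ≤ (3:ℝ) ^ ((2:ℝ)) :=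
             Real.rpow_le_rpow_of_exponent_le (by norm_num) (by norm_num)
           refine h1.trans ?_
           rw [show (2:ℝ) = ((2:ℕ):ℝ) by norm_num, Real.rpow_natCast]
           norm_num [NN]
    | (k+6) => intro _
               have h := ih (k+3) (by omega) (by omega)
               have e1 : ((k+6:ℕ):ℝ)/3 = 1 + ((k+3:ℕ):ℝ)/3 := by push_cast; ring
               have e2 : NN (k+6) = 3 + 3 * NN (k+3) := rfl
               rw [e1, Real.rpow_add (by norm_num), Real.rpow_one, e2]
               push_cast at h ⊢
               linarith




/-- `M` is `d`-decodable: every nonempty set of at most `d` columns contains a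
row of weight exactly one. -/
def IsDecodable {m n : ℕ} (M : Fin m → Fin n → Bool) (d : ℕ) : Prop :=
  ∀ S : Finset (Fin n), S.Nonempty → S.card ≤ d →
    ∃ i : Fin m, (S.filter (fun j => M i j = true)).card = 1

/-- `m*(n,d)`: the minimum number of rows of a `d`-decodable binary matrix with
`n` columns. -/
noncomputable def mStar (n d : ℕ) : ℕ :=
  sInf {m | ∃ M : Fin m → Fin n → Bool, IsDecodable M d}

theorem mStar_three_upper (n : ℕ) (hn : 3 ≤ n) :
    mStar n 3 ≤ ⌈(3 / Real.logb 2 3) * Real.logb 2 n⌉₊ := by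
  set m := ⌈(3 / Real.logb 2 3) * Real.logb 2 n⌉₊ with hm
  have hlb3 : 0 < Real.logb 2 3 := Real.logb_pos (by norm_num) (by norm_num)
  have hln : Real.logb 2 3 ≤ Real.logb 2 n := by
    apply Real.logb_le_logb_of_le (by norm_num) (by norm_num)
    exact_mod_cast hn
  have hx3 : (3:ℝ) ≤ (3 / Real.logb 2 3) * Real.logb 2 n := by
    have h0 : (3 / Real.logb 2 3) * Real.logb 2 3 = 3 := by field_simp
    have h1 := mul_le_mul_of_nonneg_left hln
      (le_of_lt (by positivity : (0:ℝ) < 3 / Real.logb 2 3))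
    linarith
  have hm3 : 3 ≤ m := by
    have h2 : ((2:ℕ):ℝ) < (3 / Real.logb 2 3) * Real.logb 2 n := by push_cast; linarith
    have := Nat.lt_ceil.mpr h2
    omega
  have hmx : ((3 / Real.logb 2 3) * Real.logb 2 n) ≤ (m:ℝ) := Nat.le_ceil _
  have hn0 : (0:ℝ) < (n:ℝ) := by positivity
  have hlog2 : Real.log 2 ≠ 0 := Real.log_ne_zero_of_pos_of_ne_one (by norm_num) (by norm_num)
  have hlog3ne : Real.log 3 ≠ 0 := Real.log_ne_zero_of_pos_of_ne_one (by norm_num) (by norm_num)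
  have hlog3 : Real.logb 2 (n:ℝ) / Real.logb 2 3 = Real.logb 3 (n:ℝ) := by
    rw [Real.logb, Real.logb, Real.logb]
    field_simp
  have hexp : Real.logb 3 (n:ℝ) ≤ (m:ℝ)/3 := by
    rw [← hlog3]
    have hrw : (3 / Real.logb 2 3) * Real.logb 2 n
        = 3 * (Real.logb 2 (n:ℝ) / Real.logb 2 3) := by ring
    rw [hrw] at hmx
    linarith
  have hnm : (n:ℝ) ≤ (NN m : ℝ) := by
    calc (n:ℝ) = 3 ^ Real.logb 3 (n:ℝ) :=
          (Real.rpow_logb (by norm_num) (by norm_num) hn0).symm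
      _ ≤ 3 ^ ((m:ℝ)/3) := Real.rpow_le_rpow_of_exponent_le (by norm_num) hexp
      _ ≤ (NN m : ℝ) := NN_bound m hm3
  have hnN : n ≤ NN m := by exact_mod_cast hnm
  apply Nat.sInf_le
  refine ⟨fun i j => MM m i.val j.val, ?_⟩
  intro S hSne hScard
  set T := S.image (Fin.val) with hT
  have hTb : ∀ j ∈ T, j < NN m := by
    intro j hj
    obtain ⟨a, _, rfl⟩ := Finset.mem_image.mp hj
    exact lt_of_lt_of_le a.isLt hnN
  obtain ⟨i, him, hci⟩ := MM_key m (by omega) T hTb (hSne.image _)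
    (le_trans Finset.card_image_le hScard)
  refine ⟨⟨i, him⟩, ?_⟩
  have he : T.filter (fun j => MM m i j = true)
      = (S.filter (fun j => MM m i j.val = true)).image Fin.val := by
    rw [hT, Finset.filter_image]
  rw [he, Finset.card_image_of_injective _ Fin.val_injective] at hci
  exact hci
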